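/- arXiv:math/0507065 — 5 statements merged into one kernel-verified Lean document; each statement's English description precedes it below -/
import Mathlib

section
/- For $x>0$, let $T_x$ be the weighted shift with weights $\alpha_0=\sqrt{1/2}$, $\alpha_1=\sqrt{x}$, $\alpha_n=\sqrt{\frac{n+1}{n+2}}$ for $n\ge 2$. Then $T_x$ is 2-hyponormal if and only if $\frac{63-\sqrt{129}}{80} \le x \le \frac{24}{35}$. -/
/-- The moments `γ n = α₀² ⋯ α_{n-1}²` of a weighted shift. -/
noncomputable def gam (α : ℕ → ℝ) (n : ℕ) : ℝ := ∏ k ∈ Finset.range n, α k ^ 2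

/-- `W_α` is `k`-hyponormal iff all `(k+1) × (k+1)` Hankel moment matrices are PSD. -/
def KHyponormal (k : ℕ) (α : ℕ → ℝ) : Prop :=
  ∀ n : ℕ, (Matrix.of fun i j : Fin (k + 1) => gam α (n + i + j)).PosSemidef

private lemma quad_key (N a b c : ℝ) (hN : 0 < N) :
    0 ≤ a^2/N + 2*a*b/(N+1) + (2*a*c + b^2)/(N+2) + 2*b*c/(N+3) + c^2/(N+4) := by
  have h1 : (0:ℝ) < N+1 := by linarith
  have h2 : (0:ℝ) < N+2 := by linarith
  have h3 : (0:ℝ) < N+3 := by linarith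
  have h4 : (0:ℝ) < N+4 := by linarith
  have key : a^2/N + 2*a*b/(N+1) + (2*a*c + b^2)/(N+2) + 2*b*c/(N+3) + c^2/(N+4)
      = ((N+3)^2*(N+4)*((N+1)*(N+2)*a + N*(N+2)*b + N*(N+1)*c)^2
         + N*(N+2)*(N+4)*((N+3)*b + 2*(N+1)*c)^2
         + 4*N*(N+1)^2*c^2)
        / (N*(N+1)^2*(N+2)^2*(N+3)^2*(N+4)) := by
    field_simp
    ring
  rw [key]
  apply div_nonneg
  · have t1 : 0 ≤ (N+3)^2*(N+4)*((N+1)*(N+2)*a + N*(N+2)*b + N*(N+1)*c)^2 :=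
      mul_nonneg (mul_nonneg (sq_nonneg _) h4.le) (sq_nonneg _)
    have t2 : 0 ≤ N*(N+2)*(N+4)*((N+3)*b + 2*(N+1)*c)^2 :=
      mul_nonneg (mul_nonneg (mul_nonneg hN.le h2.le) h4.le) (sq_nonneg _)
    have t3 : 0 ≤ 4*N*(N+1)^2*c^2 := by positivity
    linarith
  · positivity

set_option maxHeartbeats 1600000 in
theorem stmt_3 (x : ℝ) (hx : 0 < x) :
    KHyponormal 2 (fun n =>
      if n = 0 then Real.sqrt (1 / 2)
      else if n = 1 then Real.sqrt x
      else Real.sqrt ((n + 1) / (n + 2))) ↔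
    (63 - Real.sqrt 129) / 80 ≤ x ∧ x ≤ 24 / 35 := by
  set α : ℕ → ℝ := fun n =>
      if n = 0 then Real.sqrt (1 / 2)
      else if n = 1 then Real.sqrt x
      else Real.sqrt ((n + 1) / (n + 2)) with hα
  have a0 : α 0 ^ 2 = 1/2 := by
    simp only [hα]; norm_num
  have a1 : α 1 ^ 2 = x := by
    simp only [hα]; norm_num; exact Real.sq_sqrt hx.le
  have a2 : ∀ k : ℕ, α (k+2) ^ 2 = ((k:ℝ)+3)/((k:ℝ)+4) := by
    intro k
    simp only [hα]
    rw [if_neg (by omega : ¬(k+2 = 0)), if_neg (by omega : ¬(k+2 = 1))]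
    rw [Real.sq_sqrt (by positivity)]
    push_cast; ring
  have step : ∀ j : ℕ, gam α (j+1) = gam α j * α j ^ 2 := by
    intro j; simp [gam, Finset.prod_range_succ]
  have g0 : gam α 0 = 1 := by simp [gam]
  have g1 : gam α 1 = 1/2 := by rw [step 0, g0, a0]; ring
  have hg : ∀ m : ℕ, gam α (m+2) = 3*x/(2*((m:ℝ)+3)) := by
    intro m
    induction m with
    | zero => rw [show (0:ℕ)+2 = 1+1 from rfl, step 1, g1, a1]; norm_num; ring
    | succ k ih =>
      rw [show k+1+2 = (k+2)+1 from rfl, step (k+2), ih, a2]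
      push_cast
      rw [div_mul_div_comm, div_eq_div_iff (by positivity) (by positivity)]
      ring
  have g2 : gam α 2 = x/2 := by have h := hg 0; norm_num at h; linarith
  have g3 : gam α 3 = 3*x/8 := by have h := hg 1; norm_num at h; linarith
  have g4 : gam α 4 = 3*x/10 := by have h := hg 2; norm_num at h; linarith
  have g5 : gam α 5 = x/4 := by have h := hg 3; norm_num at h; linarith
  have hs0 : (0:ℝ) ≤ Real.sqrt 129 := Real.sqrt_nonneg _
  have hs2 : Real.sqrt 129 ^ 2 = 129 := Real.sq_sqrt (by norm_num)
  have hs12 : Real.sqrt 129 ≤ 12 := by nlinarith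
  constructor
  · intro h
    have q11 := (h 1).dotProduct_mulVec_nonneg ![x, -1, 0]
    have q12 := (h 1).dotProduct_mulVec_nonneg ![30, -40, 3]
    have q13 := (h 1).dotProduct_mulVec_nonneg ![3*x^2, 60*x^2 - 48*x, 60*x - 80*x^2]
    simp only [Nat.reduceAdd, dotProduct, Matrix.mulVec, Matrix.of_apply,
      Fin.sum_univ_three, Pi.star_apply, star_trivial, Fin.val_zero, Fin.val_one, Fin.val_two,
      Matrix.cons_val_zero, Matrix.cons_val_one, Matrix.head_cons, Matrix.cons_val_two,
      Matrix.tail_cons, Nat.add_zero, Nat.zero_add] at q11 q12 q13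
    rw [g1, g2, g3, g4, g5] at q11 q12 q13
    have hub : x ≤ 24/35 := by
      have h34 : x < 3/4 := by nlinarith [q11, q12]
      have hp : 0 < x^3*(3 - 4*x) :=
        mul_pos (pow_pos hx 3) (by linarith : (0:ℝ) < 3 - 4*x)
      nlinarith [q13, hp]
    refine ⟨?_, hub⟩
    have q01 := (h 0).dotProduct_mulVec_nonneg ![6, -12, 5]
    have q02 := (h 0).dotProduct_mulVec_nonneg ![3*x - 4*x^2, -2*x, 8*x - 4]
    simp only [Nat.reduceAdd, dotProduct, Matrix.mulVec, Matrix.of_apply,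
      Fin.sum_univ_three, Pi.star_apply, star_trivial, Fin.val_zero, Fin.val_one, Fin.val_two,
      Matrix.cons_val_zero, Matrix.cons_val_one, Matrix.head_cons, Matrix.cons_val_two,
      Matrix.tail_cons, Nat.add_zero, Nat.zero_add] at q01 q02
    rw [g0, g1, g2, g3, g4] at q01 q02
    have hA : 0 < x/2 - 1/4 := by nlinarith [q01]
    have hxA : 0 < x*(x/2 - 1/4) := mul_pos hx hA
    have hq : 40*x^2 - 63*x + 24 ≤ 0 := by nlinarith [q02, hxA]
    nlinarith [hq, hs0, hs2, hub]
  · rintro ⟨h1, h2⟩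
    have hq : 40*x^2 - 63*x + 24 ≤ 0 := by
      have f1 : 0 ≤ Real.sqrt 129 + 80*x - 63 := by nlinarith
      have f2 : 0 ≤ Real.sqrt 129 - 80*x + 63 := by nlinarith
      nlinarith [mul_nonneg f1 f2]
    have hxl : 51/80 ≤ x := by nlinarith
    intro n
    refine Matrix.PosSemidef.of_dotProduct_mulVec_nonneg ?_ ?_
    · ext i j
      simp only [Matrix.conjTranspose_apply, Matrix.of_apply, star_trivial]
      congr 1
      omega
    · intro v
      simp only [Nat.reduceAdd, dotProduct, Matrix.mulVec, Matrix.of_apply,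
        Fin.sum_univ_three, Pi.star_apply, star_trivial, Fin.val_zero, Fin.val_one, Fin.val_two,
        Nat.add_zero]
      match n with
      | 0 =>
        norm_num [g0, g1, g2, g3, g4]
        nlinarith [sq_nonneg (v 0 + (v 1)/2 + (x/2) * v 2),
          sq_nonneg ((x/2 - 1/4)*(v 1) + (x/8)*(v 2)),
          mul_nonneg (mul_nonneg hx.le (by linarith : (0:ℝ) ≤ -(40*x^2 - 63*x + 24))) (sq_nonneg (v 2)),
          hxl, sq_nonneg (v 1), sq_nonneg (v 2)]
      | 1 =>
        norm_num [g1, g2, g3, g4, g5]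
        have hA1 : 0 < 3*x/16 - x^2/4 := by nlinarith
        nlinarith [sq_nonneg ((v 0)/2 + (x/2)*(v 1) + (3*x/8)*(v 2)),
          sq_nonneg ((3*x/16 - x^2/4)*(v 1) + (3*x/20 - 3*x^2/16)*(v 2)),
          mul_nonneg (mul_nonneg (sq_nonneg x) (by linarith : (0:ℝ) ≤ 24 - 35*x)) (sq_nonneg (v 2)),
          hA1]
      | (m+2) =>
        rw [show m+2+1 = m+3 from rfl, show m+2+2 = m+4 from rfl,
            show m+3+1 = m+4 from rfl, show m+3+2 = m+5 from rfl,
            show m+4+1 = m+5 from rfl, show m+4+2 = m+6 from rfl]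
        have e2 : gam α (m+2) = 3*x/(2*((m:ℝ)+3)) := hg m
        have e3 : gam α (m+3) = 3*x/(2*((m:ℝ)+4)) := by
          rw [show m+3 = (m+1)+2 from rfl, hg (m+1)]; push_cast; ring_nf
        have e4 : gam α (m+4) = 3*x/(2*((m:ℝ)+5)) := by
          rw [show m+4 = (m+2)+2 from rfl, hg (m+2)]; push_cast; ring_nf
        have e5 : gam α (m+5) = 3*x/(2*((m:ℝ)+6)) := by
          rw [show m+5 = (m+3)+2 from rfl, hg (m+3)]; push_cast; ring_nf
        have e6 : gam α (m+6) = 3*x/(2*((m:ℝ)+7)) := by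
          rw [show m+6 = (m+4)+2 from rfl, hg (m+4)]; push_cast; ring_nf
        rw [e2, e3, e4, e5, e6]
        have key := quad_key ((m:ℝ)+3) (v 0) (v 1) (v 2) (by positivity)
        have hc : (0:ℝ) ≤ 3*x/2 := by linarith
        have hm := mul_nonneg hc key
        have hrw : (3*x/2) * ((v 0)^2/((m:ℝ)+3) + 2*(v 0)*(v 1)/((m:ℝ)+3+1)
            + (2*(v 0)*(v 2) + (v 1)^2)/((m:ℝ)+3+2) + 2*(v 1)*(v 2)/((m:ℝ)+3+3) + (v 2)^2/((m:ℝ)+3+4))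
            = v 0 * (3*x/(2*((m:ℝ)+3)) * v 0 + 3*x/(2*((m:ℝ)+4)) * v 1 + 3*x/(2*((m:ℝ)+5)) * v 2) +
              v 1 * (3*x/(2*((m:ℝ)+4)) * v 0 + 3*x/(2*((m:ℝ)+5)) * v 1 + 3*x/(2*((m:ℝ)+6)) * v 2) +
              v 2 * (3*x/(2*((m:ℝ)+5)) * v 0 + 3*x/(2*((m:ℝ)+6)) * v 1 + 3*x/(2*((m:ℝ)+7)) * v 2) := by
          have d3 : ((m:ℝ)+3) ≠ 0 := by positivity
          have d4 : ((m:ℝ)+4) ≠ 0 := by positivity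
          have d5 : ((m:ℝ)+5) ≠ 0 := by positivity
          have d6 : ((m:ℝ)+6) ≠ 0 := by positivity
          have d7 : ((m:ℝ)+7) ≠ 0 := by positivity
          field_simp
          ring
        rw [← hrw]
        exact hm
end

section
/- Let $\alpha = \{\alpha_n\}_{n=0}^\infty$ be a strictly increasing sequence of positive reals, and define $u_n = \alpha_n^2 - \alpha_{n-1}^2$, $v_n = \alpha_n^2\alpha_{n+1}^2 - \alpha_{n-1}^2\alpha_{n-2}^2$, $w_n = \alpha_n^2(\alpha_{n+1}^2-\alpha_{n-1}^2)^2$ (with $\alpha_{-1}=\alpha_{-2}=0$), and $p_n = u_n v_{n+1} - w_n$. Then the weighted shift $W_\alpha$ is 2-hyponormal if and only if $p_n \ge 0$ for all $n \ge 0$. -/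
/-- Extension of the weight sequence by `α₋₁ = α₋₂ = 0`. -/
noncomputable def ae (α : ℕ → ℝ) : ℤ → ℝ := fun n => if 0 ≤ n then α n.toNat else 0

noncomputable def uu (α : ℕ → ℝ) (n : ℕ) : ℝ := ae α n ^ 2 - ae α ((n : ℤ) - 1) ^ 2

noncomputable def vv (α : ℕ → ℝ) (n : ℕ) : ℝ :=
  ae α n ^ 2 * ae α ((n : ℤ) + 1) ^ 2 - ae α ((n : ℤ) - 1) ^ 2 * ae α ((n : ℤ) - 2) ^ 2

noncomputable def ww (α : ℕ → ℝ) (n : ℕ) : ℝ :=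
  ae α n ^ 2 * (ae α ((n : ℤ) + 1) ^ 2 - ae α ((n : ℤ) - 1) ^ 2) ^ 2

noncomputable def pp (α : ℕ → ℝ) (n : ℕ) : ℝ := uu α n * vv α (n + 1) - ww α n

lemma gam_succ (α : ℕ → ℝ) (n : ℕ) : gam α (n+1) = gam α n * α n ^ 2 :=
  Finset.prod_range_succ _ _

lemma gam_pos (α : ℕ → ℝ) (hpos : ∀ n, 0 < α n) (n : ℕ) : 0 < gam α n :=
  Finset.prod_pos fun k _ => pow_pos (hpos k) 2

lemma ae_nat (α : ℕ → ℝ) (m : ℕ) : ae α (m : ℤ) = α m := by simp [ae]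

lemma pp_succ (α : ℕ → ℝ) (n : ℕ) :
    pp α (n+1) = (α (n+1)^2 - α n^2) * (α (n+2)^2 * α (n+3)^2 - α (n+1)^2 * α n^2)
      - α (n+1)^2 * (α (n+2)^2 - α n^2)^2 := by
  simp only [pp, uu, vv, ww]
  rw [show ((n+1:ℕ):ℤ) - 1 = ((n:ℕ):ℤ) by push_cast; ring,
      show ((n+1:ℕ):ℤ) + 1 = ((n+2:ℕ):ℤ) by push_cast; ring,
      show ((n+1+1:ℕ):ℤ) = ((n+2:ℕ):ℤ) by push_cast; ring,
      show ((n+2:ℕ):ℤ) + 1 = ((n+3:ℕ):ℤ) by push_cast; ring,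
      show ((n+2:ℕ):ℤ) - 1 = ((n+1:ℕ):ℤ) by push_cast; ring,
      show ((n+2:ℕ):ℤ) - 2 = ((n:ℕ):ℤ) by push_cast; ring]
  simp only [ae_nat]

lemma pp_zero (α : ℕ → ℝ) : pp α 0 = α 0 ^ 2 * α 1 ^ 2 * (α 2 ^ 2 - α 1 ^ 2) := by
  simp only [pp, uu, vv, ww]
  norm_num [ae, show ((0:ℕ):ℤ) - 1 = -1 by ring, show ((1:ℕ):ℤ) - 1 = 0 by ring,
    show ((1:ℕ):ℤ) - 2 = -1 by ring, show ((1:ℕ):ℤ) + 1 = 2 by ring, Int.toNat_natCast, show Int.toNat 2 = 2 from rfl]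
  try ring

lemma quad_eval (α : ℕ → ℝ) (n : ℕ) (x : Fin 3 → ℝ) :
    dotProduct (star x)
      (Matrix.mulVec (Matrix.of fun i j : Fin 3 => gam α (n + i + j)) x) =
      x 0 * (gam α n * x 0 + gam α (n+1) * x 1 + gam α (n+2) * x 2) +
      x 1 * (gam α (n+1) * x 0 + gam α (n+2) * x 1 + gam α (n+3) * x 2) +
      x 2 * (gam α (n+2) * x 0 + gam α (n+3) * x 1 + gam α (n+4) * x 2) := by
  simp [dotProduct, Matrix.mulVec, Fin.sum_univ_three]

/-- From PSD quadratic form applied to the cofactor vector, the determinant is nonneg. -/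
lemma forward_aux (A B C D E F : ℝ) (hd2 : 0 < A*D - B^2)
    (h : 0 ≤ (B*E - C*D) * (A*(B*E - C*D) + B*(B*C - A*E) + C*(A*D - B^2)) +
        (B*C - A*E) * (B*(B*E - C*D) + D*(B*C - A*E) + E*(A*D - B^2)) +
        (A*D - B^2) * (C*(B*E - C*D) + E*(B*C - A*E) + F*(A*D - B^2))) :
    0 ≤ A*(D*F - E^2) - B*(B*F - C*E) + C*(B*E - C*D) := by
  have key : (B*E - C*D) * (A*(B*E - C*D) + B*(B*C - A*E) + C*(A*D - B^2)) +
        (B*C - A*E) * (B*(B*E - C*D) + D*(B*C - A*E) + E*(A*D - B^2)) +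
        (A*D - B^2) * (C*(B*E - C*D) + E*(B*C - A*E) + F*(A*D - B^2)) =
        (A*(D*F - E^2) - B*(B*F - C*E) + C*(B*E - C*D)) * (A*D - B^2) := by ring
  nlinarith [h, hd2, key]

/-- Cholesky-type decomposition: nonneg determinant and minors give PSD quadratic form. -/
lemma backward_aux (A B C D E F x1 x2 x3 : ℝ) (hA : 0 < A) (hd2 : 0 < A*D - B^2)
    (hdet : 0 ≤ A*(D*F - E^2) - B*(B*F - C*E) + C*(B*E - C*D)) :
    0 ≤ x1 * (A*x1 + B*x2 + C*x3) + x2 * (B*x1 + D*x2 + E*x3) +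
        x3 * (C*x1 + E*x2 + F*x3) := by
  have key : (A*(A*D - B^2)) *
      (x1 * (A*x1 + B*x2 + C*x3) + x2 * (B*x1 + D*x2 + E*x3) +
        x3 * (C*x1 + E*x2 + F*x3)) =
      (A*D - B^2) * (A*x1 + B*x2 + C*x3)^2 + ((A*D - B^2)*x2 + (A*E - B*C)*x3)^2 +
      A * (A*(D*F - E^2) - B*(B*F - C*E) + C*(B*E - C*D)) * x3^2 := by ring
  have h1 : 0 ≤ (A*(A*D - B^2)) *
      (x1 * (A*x1 + B*x2 + C*x3) + x2 * (B*x1 + D*x2 + E*x3) +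
        x3 * (C*x1 + E*x2 + F*x3)) := by
    rw [key]
    have t1 : 0 ≤ (A*D - B^2) * (A*x1 + B*x2 + C*x3)^2 :=
      mul_nonneg hd2.le (sq_nonneg _)
    have t2 : 0 ≤ ((A*D - B^2)*x2 + (A*E - B*C)*x3)^2 := sq_nonneg _
    have t3 : 0 ≤ A * (A*(D*F - E^2) - B*(B*F - C*E) + C*(B*E - C*D)) * x3^2 :=
      mul_nonneg (mul_nonneg hA.le hdet) (sq_nonneg _)
    linarith
  nlinarith [h1, mul_pos hA hd2]

theorem stmt_4 (α : ℕ → ℝ) (hpos : ∀ n, 0 < α n) (hmono : StrictMono α) :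
    KHyponormal 2 α ↔ ∀ n : ℕ, 0 ≤ pp α n := by
  have hsq : ∀ m k : ℕ, m < k → α m ^ 2 < α k ^ 2 := by
    intro m k hmk
    have h1 := hmono hmk
    nlinarith [hpos m, hpos k]
  have e2 : ∀ n, gam α (n+2) = gam α n * α n ^ 2 * α (n+1) ^ 2 := fun n => by
    rw [show n+2 = n+1+1 from rfl, gam_succ, gam_succ]
  have e3 : ∀ n, gam α (n+3) = gam α n * α n ^ 2 * α (n+1) ^ 2 * α (n+2) ^ 2 := fun n => by
    rw [show n+3 = n+2+1 from rfl, gam_succ, e2]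
  have e4 : ∀ n, gam α (n+4) = gam α n * α n ^ 2 * α (n+1) ^ 2 * α (n+2) ^ 2 * α (n+3) ^ 2 :=
    fun n => by rw [show n+4 = n+3+1 from rfl, gam_succ, e3]
  have hd2 : ∀ n, 0 < gam α n * gam α (n+2) - gam α (n+1)^2 := by
    intro n
    rw [e2, gam_succ]
    have h := hsq n (n+1) (by omega)
    have hg := gam_pos α hpos n
    have key : gam α n * (gam α n * α n ^ 2 * α (n+1) ^ 2) - (gam α n * α n ^ 2) ^ 2 =
        (gam α n ^ 2 * α n ^ 2) * (α (n+1) ^ 2 - α n ^ 2) := by ring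
    rw [key]
    exact mul_pos (mul_pos (pow_pos hg 2) (pow_pos (hpos n) 2)) (by linarith)
  have hdetval : ∀ n, gam α n * (gam α (n+2) * gam α (n+4) - gam α (n+3)^2)
      - gam α (n+1) * (gam α (n+1) * gam α (n+4) - gam α (n+2) * gam α (n+3))
      + gam α (n+2) * (gam α (n+1) * gam α (n+3) - gam α (n+2) * gam α (n+2)) =
      (gam α n ^ 3 * α n ^ 4 * α (n+1) ^ 2) * pp α (n+1) := by
    intro n
    rw [pp_succ, e4, e3, e2, gam_succ]
    ring
  constructor
  · intro hK n
    match n with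
    | 0 =>
      rw [pp_zero]
      exact mul_nonneg (by positivity) (by nlinarith [hsq 1 2 (by omega)])
    | (n+1) =>
      have h := (Matrix.posSemidef_iff_dotProduct_mulVec.mp (hK n)).2
        ![gam α (n+1) * gam α (n+3) - gam α (n+2) * gam α (n+2),
          gam α (n+1) * gam α (n+2) - gam α n * gam α (n+3),
          gam α n * gam α (n+2) - gam α (n+1)^2]
      rw [quad_eval] at h
      simp only [Matrix.cons_val_zero, Matrix.cons_val_one, Matrix.head_cons,
        Matrix.cons_val_two, Matrix.tail_cons] at h
      have hdnn := forward_aux (gam α n) (gam α (n+1)) (gam α (n+2)) (gam α (n+2))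
        (gam α (n+3)) (gam α (n+4)) (hd2 n) h
      have hval : gam α n * (gam α (n+2) * gam α (n+4) - gam α (n+3)^2)
          - gam α (n+1) * (gam α (n+1) * gam α (n+4) - gam α (n+2) * gam α (n+3))
          + gam α (n+2) * (gam α (n+1) * gam α (n+3) - gam α (n+2) * gam α (n+2)) =
          (gam α n ^ 3 * α n ^ 4 * α (n+1) ^ 2) * pp α (n+1) := hdetval n
      have hc : 0 < gam α n ^ 3 * α n ^ 4 * α (n+1) ^ 2 :=
        mul_pos (mul_pos (pow_pos (gam_pos α hpos n) 3) (pow_pos (hpos n) 4))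
          (pow_pos (hpos (n+1)) 2)
      rw [hval] at hdnn
      nlinarith [hdnn, hc]
  · intro hp n
    refine Matrix.posSemidef_iff_dotProduct_mulVec.mpr ⟨?_, ?_⟩
    · ext i j
      simp only [Matrix.conjTranspose_apply, Matrix.of_apply, star_trivial]
      congr 1
      omega
    · intro x
      rw [quad_eval]
      have hdnn : 0 ≤ gam α n * (gam α (n+2) * gam α (n+4) - gam α (n+3)^2)
          - gam α (n+1) * (gam α (n+1) * gam α (n+4) - gam α (n+2) * gam α (n+3))
          + gam α (n+2) * (gam α (n+1) * gam α (n+3) - gam α (n+2) * gam α (n+2)) := by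
        rw [hdetval n]
        exact mul_nonneg (le_of_lt (mul_pos (mul_pos (pow_pos (gam_pos α hpos n) 3)
          (pow_pos (hpos n) 4)) (pow_pos (hpos (n+1)) 2))) (hp (n+1))
      exact backward_aux _ _ _ _ _ _ _ _ _ (gam_pos α hpos n) (hd2 n) hdnn
end

section
/- Let $\mu$ be a Borel probability measure on $[0,R]$ with $R\in\operatorname{supp}\mu$. A subnormal weighted shift with Berger measure $\mu$ admits an $n$-step subnormal extension if and only if $1/t^n \in L^1(\mu)$. -/
open MeasureTheory
open scoped NNReal ENNReal

/-- `μ` is the Berger measure of the weighted shift `W_α`. -/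
def IsBergerMeasure (α : ℕ → ℝ) (μ : Measure ℝ) : Prop :=
  IsProbabilityMeasure μ ∧ μ (Set.Icc 0 (⨆ n, α n ^ 2))ᶜ = 0 ∧
    ∀ n : ℕ, gam α n = ∫ t, t ^ n ∂μ

/-- Berger's characterization of subnormality of the weighted shift. -/
def BergerSubnormal (α : ℕ → ℝ) : Prop := ∃ μ : Measure ℝ, IsBergerMeasure α μ

/-- The `n`-step extension `W_{(x_n,…,x_1)α}`: prepend the weights `x_n, …, x_1`. -/
noncomputable def extSeq (n : ℕ) (x : ℕ → ℝ) (α : ℕ → ℝ) : ℕ → ℝ :=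
  fun k => if k < n then x (n - k) else α (k - n)

lemma ae_mem_of_compl_null {μ : Measure ℝ} {s : Set ℝ} (h : μ sᶜ = 0) : ∀ᵐ t ∂μ, t ∈ s := by
  rw [Filter.eventually_iff]
  exact mem_ae_iff.mpr h

lemma integrable_of_cont {μ : Measure ℝ} [IsFiniteMeasure μ] {T : ℝ}
    (hT : μ (Set.Icc 0 T)ᶜ = 0) {f : ℝ → ℝ} (hf : Continuous f) : Integrable f μ := by
  obtain ⟨C, hC⟩ := (isCompact_Icc (a := (0:ℝ)) (b := T)).exists_bound_of_continuousOn
    hf.continuousOn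
  refine Integrable.mono' (integrable_const C) hf.aestronglyMeasurable ?_
  filter_upwards [ae_mem_of_compl_null hT] with t ht using hC t ht

lemma measure_ext_of_moments (μ ν : Measure ℝ) [IsFiniteMeasure μ] [IsFiniteMeasure ν]
    (T : ℝ) (hμT : μ (Set.Icc 0 T)ᶜ = 0) (hνT : ν (Set.Icc 0 T)ᶜ = 0)
    (h : ∀ m : ℕ, ∫ t, t ^ m ∂μ = ∫ t, t ^ m ∂ν) : μ = ν := by
  have hpoly : ∀ p : Polynomial ℝ, ∫ t, p.eval t ∂μ = ∫ t, p.eval t ∂ν := by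
    intro p
    induction p using Polynomial.induction_on' with
    | add p q hp hq =>
      simp only [Polynomial.eval_add]
      rw [integral_add (integrable_of_cont hμT (Polynomial.continuous p))
          (integrable_of_cont hμT (Polynomial.continuous q)),
        integral_add (integrable_of_cont hνT (Polynomial.continuous p))
          (integrable_of_cont hνT (Polynomial.continuous q)), hp, hq]
    | monomial m c =>
      simp only [Polynomial.eval_monomial]
      rw [MeasureTheory.integral_const_mul, MeasureTheory.integral_const_mul, h m]
  have hcont : ∀ g : ℝ → ℝ, Continuous g → ∫ t, g t ∂μ = ∫ t, g t ∂ν := by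
    intro g hg
    set D := ∫ t, g t ∂μ - ∫ t, g t ∂ν with hD
    set M := (μ Set.univ).toReal + (ν Set.univ).toReal with hM
    have hM0 : 0 ≤ M := add_nonneg ENNReal.toReal_nonneg ENNReal.toReal_nonneg
    have key : ∀ ε : ℝ, 0 < ε → |D| ≤ ε * M := by
      intro ε hε
      obtain ⟨p, hp⟩ := exists_polynomial_near_of_continuousOn 0 T g hg.continuousOn ε hε
      have hgμ := integrable_of_cont hμT hg
      have hgν := integrable_of_cont hνT hg
      have hpμ := integrable_of_cont hμT (Polynomial.continuous p)
      have hpν := integrable_of_cont hνT (Polynomial.continuous p)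
      have e1 : ‖∫ t, (g t - p.eval t) ∂μ‖ ≤ ε * (μ Set.univ).toReal := by
        refine norm_integral_le_of_norm_le_const ?_
        filter_upwards [ae_mem_of_compl_null hμT] with t ht
        have := hp t ht
        rw [Real.norm_eq_abs, abs_sub_comm]
        exact le_of_lt this
      have e2 : ‖∫ t, (g t - p.eval t) ∂ν‖ ≤ ε * (ν Set.univ).toReal := by
        refine norm_integral_le_of_norm_le_const ?_
        filter_upwards [ae_mem_of_compl_null hνT] with t ht
        have := hp t ht
        rw [Real.norm_eq_abs, abs_sub_comm]
        exact le_of_lt this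
      have hsub : D = (∫ t, (g t - p.eval t) ∂μ) - ∫ t, (g t - p.eval t) ∂ν := by
        rw [integral_sub hgμ hpμ, integral_sub hgν hpν, hD, hpoly p]; ring
      rw [hsub]
      calc |(∫ t, (g t - p.eval t) ∂μ) - ∫ t, (g t - p.eval t) ∂ν|
          ≤ ‖∫ t, (g t - p.eval t) ∂μ‖ + ‖∫ t, (g t - p.eval t) ∂ν‖ := abs_sub _ _
        _ ≤ ε * (μ Set.univ).toReal + ε * (ν Set.univ).toReal := add_le_add e1 e2
        _ = ε * M := by rw [hM]; ring
    have habs : |D| ≤ 0 := by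
      refine le_of_forall_pos_le_add ?_
      intro ε hε
      have h1 : 0 < ε / (M + 1) := by positivity
      have := key _ h1
      rw [zero_add]
      calc |D| ≤ ε / (M + 1) * M := this
        _ ≤ ε := by
            rw [div_mul_eq_mul_div, div_le_iff₀ (by linarith)]
            nlinarith
    have : D = 0 := abs_nonpos_iff.mp habs
    linarith [hD ▸ this]
  refine ext_of_forall_lintegral_eq_of_IsFiniteMeasure ?_
  intro f
  have hfc : Continuous fun t => (f t : ℝ) := NNReal.continuous_coe.comp f.continuous
  rw [lintegral_coe_eq_integral _ (integrable_of_cont hμT hfc),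
    lintegral_coe_eq_integral _ (integrable_of_cont hνT hfc), hcont _ hfc]

lemma gam_extSeq_add (n m : ℕ) (x α : ℕ → ℝ) :
    gam (extSeq n x α) (n + m) = gam (extSeq n x α) n * gam α m := by
  unfold gam
  rw [Finset.prod_range_add]
  congr 1
  refine Finset.prod_congr rfl fun k _ => ?_
  have h1 : ¬ (n + k < n) := by omega
  show (if n + k < n then x (n - (n + k)) else α (n + k - n)) ^ 2 = α k ^ 2
  rw [if_neg h1, Nat.add_sub_cancel_left]
theorem stmt_12 (α : ℕ → ℝ) (hpos : ∀ k, 0 < α k) (hbdd : BddAbove (Set.range α))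
    (μ : Measure ℝ) (hμ : IsBergerMeasure α μ)
    (hsupp : ∀ U ∈ nhds (⨆ k, α k ^ 2), μ U ≠ 0)
    (n : ℕ) (hn : 1 ≤ n) :
    (∃ x : ℕ → ℝ, (∀ j, 1 ≤ j → j ≤ n → 0 < x j) ∧ BergerSubnormal (extSeq n x α)) ↔
      (μ {0} = 0 ∧ Integrable (fun t => 1 / t ^ n) μ) := by
  obtain ⟨hprob, hμsupp, hmom⟩ := hμ
  haveI := hprob
  constructor
  · rintro ⟨x, hx, ν, hνprob, hνsupp, hνmom⟩
    haveI := hνprob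
    set β := extSeq n x α with hβ
    set S := ⨆ k, β k ^ 2 with hS
    have hβx : ∀ k, k < n → β k = x (n - k) := fun k hk => if_pos hk
    have hS0 : 0 ≤ S := by
      by_cases hb : BddAbove (Set.range fun k => β k ^ 2)
      · exact le_trans (sq_nonneg (β 0)) (le_ciSup hb 0)
      · rw [hS, Real.iSup_of_not_bddAbove hb]
    set T := max (⨆ k, α k ^ 2) S with hT
    have hμT : μ (Set.Icc 0 T)ᶜ = 0 := by
      refine measure_mono_null ?_ hμsupp
      exact Set.compl_subset_compl.mpr (Set.Icc_subset_Icc_right (le_max_left _ _))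
    have hνT : ν (Set.Icc 0 T)ᶜ = 0 := by
      refine measure_mono_null ?_ hνsupp
      exact Set.compl_subset_compl.mpr (Set.Icc_subset_Icc_right (le_max_right _ _))
    have haeν : ∀ᵐ t ∂ν, t ∈ Set.Icc (0:ℝ) S := ae_mem_of_compl_null hνsupp
    set c := gam β n with hc
    have hcpos : 0 < c := by
      rw [hc]
      refine Finset.prod_pos fun k hk => ?_
      rw [Finset.mem_range] at hk
      rw [hβx k hk]
      exact pow_pos (hx _ (by omega) (by omega)) 2
    set d : ℝ → ℝ≥0 := fun t => Real.toNNReal (c⁻¹ * t ^ n) with hd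
    have hdmeas : Measurable d :=
      measurable_real_toNNReal.comp (measurable_const.mul (measurable_id.pow_const n))
    set μ' := ν.withDensity (fun t => (d t : ℝ≥0∞)) with hμ'
    have hdcoe : ∀ t, ((d t : ℝ)) = max (c⁻¹ * t ^ n) 0 := fun t => Real.coe_toNNReal' _
    haveI hfin : IsFiniteMeasure μ' := by
      constructor
      rw [hμ', withDensity_apply _ MeasurableSet.univ, Measure.restrict_univ]
      calc ∫⁻ t, (d t : ℝ≥0∞) ∂ν ≤ ∫⁻ _, (Real.toNNReal (c⁻¹ * S ^ n) : ℝ≥0∞) ∂ν := by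
            refine lintegral_mono_ae ?_
            filter_upwards [haeν] with t ht
            refine ENNReal.coe_le_coe.mpr (Real.toNNReal_mono ?_)
            exact mul_le_mul_of_nonneg_left (pow_le_pow_left₀ ht.1 ht.2 n)
              (inv_nonneg.mpr hcpos.le)
        _ < ⊤ := by
            rw [lintegral_const]
            exact ENNReal.mul_lt_top ENNReal.coe_lt_top (measure_lt_top ν _)
    have hmom' : ∀ m : ℕ, ∫ t, t ^ m ∂μ = ∫ t, t ^ m ∂μ' := by
      intro m
      rw [hμ', integral_withDensity_eq_integral_smul hdmeas]
      have e1 : ∫ t, d t • t ^ m ∂ν = ∫ t, c⁻¹ * t ^ (n + m) ∂ν := by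
        refine integral_congr_ae ?_
        filter_upwards [haeν] with t ht
        rw [NNReal.smul_def, smul_eq_mul, hdcoe,
          max_eq_left (mul_nonneg (inv_nonneg.mpr hcpos.le) (pow_nonneg ht.1 n)), pow_add]
        ring
      rw [e1, MeasureTheory.integral_const_mul, ← hνmom (n + m), gam_extSeq_add, ← hc,
        ← hmom m]
      field_simp
    have hμ'T : μ' (Set.Icc 0 T)ᶜ = 0 := by
      rw [hμ']
      exact withDensity_absolutelyContinuous ν _ hνT
    have hμeq : μ = μ' := measure_ext_of_moments μ μ' T hμT hμ'T hmom'
    constructor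
    · rw [hμeq, hμ', withDensity_apply _ (measurableSet_singleton 0),
        lintegral_singleton]
      have : d 0 = 0 := by
        rw [hd]
        simp [zero_pow (by omega : n ≠ 0)]
      rw [this]
      simp
    · rw [hμeq, hμ']
      rw [integrable_withDensity_iff_integrable_smul hdmeas]
      refine Integrable.mono' (integrable_const c⁻¹) ?_ ?_
      · refine Measurable.aestronglyMeasurable ?_
        refine ((measurable_coe_nnreal_real.comp hdmeas).smul ?_)
        simpa [one_div] using (measurable_id.pow_const n : Measurable fun t : ℝ => t ^ n)
      · refine Filter.Eventually.of_forall fun t => ?_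
        rw [NNReal.smul_def, smul_eq_mul, hdcoe]
        rcases le_or_gt (t ^ n) 0 with h | h
        · rw [max_eq_right (by nlinarith [inv_nonneg.mpr hcpos.le])]
          simp [inv_nonneg.mpr hcpos.le]
        · rw [max_eq_left (by positivity), Real.norm_eq_abs]
          rw [show c⁻¹ * t ^ n * (1 / t ^ n) = c⁻¹ by field_simp]
          rw [abs_of_nonneg (inv_nonneg.mpr hcpos.le)]
  · rintro ⟨h0, hint⟩
    have haeIcc : ∀ᵐ t ∂μ, t ∈ Set.Icc (0:ℝ) (⨆ k, α k ^ 2) := ae_mem_of_compl_null hμsupp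
    have haene : ∀ᵐ t ∂μ, t ≠ 0 := by
      have : μ ({0}ᶜ : Set ℝ)ᶜ = 0 := by rwa [compl_compl]
      filter_upwards [ae_mem_of_compl_null this] with t ht using ht
    have haepos : ∀ᵐ t ∂μ, 0 < t := by
      filter_upwards [haeIcc, haene] with t h1 h2
      exact lt_of_le_of_ne h1.1 (Ne.symm h2)
    set I : ℕ → ℝ := fun j => ∫ t, 1 / t ^ j ∂μ with hI
    have hIint : ∀ j, j ≤ n → Integrable (fun t => 1 / t ^ j) μ := by
      intro j hj
      refine Integrable.mono' (hint.add (integrable_const 1)) ?_ ?_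
      · refine Measurable.aestronglyMeasurable ?_
        simpa [one_div] using (measurable_id.pow_const j : Measurable fun t : ℝ => t ^ j)
      · filter_upwards [haepos] with t ht
        have h1 : 0 < t ^ j := pow_pos ht j
        have h2 : 0 < t ^ n := pow_pos ht n
        simp only [Pi.add_apply]
        rw [Real.norm_eq_abs, abs_of_pos (by positivity)]
        rcases le_total t 1 with h | h
        · have h3 : t ^ n ≤ t ^ j := pow_le_pow_of_le_one ht.le h hj
          have h4 : 1 / t ^ j ≤ 1 / t ^ n := one_div_le_one_div_of_le h2 h3
          have h5 : (0:ℝ) ≤ 1 := zero_le_one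
          linarith
        · have h3 : (1:ℝ) ≤ t ^ j := one_le_pow₀ h
          have h4 : 1 / t ^ j ≤ 1 := by
            rw [div_le_one h1]; exact h3
          have h5 : (0:ℝ) ≤ 1 / t ^ n := by positivity
          linarith
    have hIpos : ∀ j, j ≤ n → 0 < I j := by
      intro j hj
      have hnn : 0 ≤ᵐ[μ] fun t => 1 / t ^ j := by
        filter_upwards [haepos] with t ht
        positivity
      rw [hI]
      rw [integral_pos_iff_support_of_nonneg_ae hnn (hIint j hj)]
      have hs : ∀ᵐ t ∂μ, t ∈ Function.support fun t => 1 / t ^ j := by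
        filter_upwards [haepos] with t ht
        have : 0 < 1 / t ^ j := by positivity
        exact this.ne'
      have h2 : μ (Function.support fun t => 1 / t ^ j)ᶜ = 0 := by
        rw [ae_iff] at hs
        simpa [Set.compl_def] using hs
      have h3 : (1:ℝ≥0∞) ≤ μ (Function.support fun t => 1 / t ^ j) := by
        calc (1:ℝ≥0∞) = μ Set.univ := (measure_univ).symm
          _ = μ ((Function.support fun t => 1 / t ^ j) ∪
              (Function.support fun t => 1 / t ^ j)ᶜ) := by rw [Set.union_compl_self]
          _ ≤ μ (Function.support fun t => 1 / t ^ j) +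
              μ (Function.support fun t => 1 / t ^ j)ᶜ := measure_union_le _ _
          _ = μ (Function.support fun t => 1 / t ^ j) := by rw [h2, add_zero]
      exact lt_of_lt_of_le (by norm_num) h3
    have hI0 : I 0 = 1 := by
      rw [hI]
      simp
    have hInpos : 0 < I n := hIpos n le_rfl
    set x : ℕ → ℝ := fun j => Real.sqrt (I (j - 1) / I j) with hxdef
    have hxpos : ∀ j, 1 ≤ j → j ≤ n → 0 < x j := fun j h1 h2 =>
      Real.sqrt_pos.mpr (div_pos (hIpos (j - 1) (by omega)) (hIpos j h2))
    have hxsq : ∀ j, 1 ≤ j → j ≤ n → x j ^ 2 = I (j - 1) / I j := fun j h1 h2 =>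
      Real.sq_sqrt (le_of_lt (div_pos (hIpos (j - 1) (by omega)) (hIpos j h2)))
    refine ⟨x, hxpos, ?_⟩
    set β := extSeq n x α with hβ
    have hβx : ∀ k, k < n → β k = x (n - k) := fun k hk => if_pos hk
    have hβα : ∀ k, β (k + n) = α k := by
      intro k
      show (if k + n < n then x (n - (k + n)) else α (k + n - n)) = α k
      rw [if_neg (by omega), Nat.add_sub_cancel]
    have htele : ∀ m, m ≤ n → ∏ k ∈ Finset.range m, x (n - k) ^ 2 = I (n - m) / I n := by
      intro m
      induction m with
      | zero => intro _; simp [div_self hInpos.ne']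
      | succ m ih =>
        intro hm
        rw [Finset.prod_range_succ, ih (by omega), hxsq (n - m) (by omega) (by omega)]
        have e1 : n - m - 1 = n - (m + 1) := by omega
        rw [e1]
        have h1 := (hIpos (n - m) (by omega)).ne'
        field_simp
    have hgamle : ∀ m, m ≤ n → gam β m = I (n - m) / I n := by
      intro m hm
      rw [← htele m hm]
      refine Finset.prod_congr rfl fun k hk => ?_
      rw [Finset.mem_range] at hk
      rw [hβx k (by omega)]
    have hgamn : gam β n = 1 / I n := by
      rw [hgamle n le_rfl, Nat.sub_self, hI0]
    set d : ℝ → ℝ≥0 := fun t => Real.toNNReal ((I n)⁻¹ * (1 / t ^ n)) with hd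
    have hdmeas : Measurable d := by
      refine measurable_real_toNNReal.comp (measurable_const.mul ?_)
      simpa [one_div] using (measurable_id.pow_const n : Measurable fun t : ℝ => t ^ n)
    set ν := μ.withDensity (fun t => (d t : ℝ≥0∞)) with hν
    have hdcoe : ∀ t, ((d t : ℝ)) = max ((I n)⁻¹ * (1 / t ^ n)) 0 :=
      fun t => Real.coe_toNNReal' _
    have hdae : ∀ᵐ t ∂μ, ((d t : ℝ)) = (I n)⁻¹ * (1 / t ^ n) := by
      filter_upwards [haepos] with t ht
      rw [hdcoe]
      exact max_eq_left (by positivity)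
    have hdint : Integrable (fun t => (d t : ℝ)) μ := by
      have h1 : Integrable (fun t => (I n)⁻¹ * (1 / t ^ n)) μ := hint.const_mul _
      have h2 := h1.pos_part
      simp only [hdcoe]
      exact h2
    have htrans : ∀ g : ℝ → ℝ, ∫ t, g t ∂ν = ∫ t, (I n)⁻¹ * (1 / t ^ n) * g t ∂μ := by
      intro g
      rw [hν, integral_withDensity_eq_integral_smul hdmeas]
      refine integral_congr_ae ?_
      filter_upwards [hdae] with t ht
      rw [NNReal.smul_def, smul_eq_mul, ht]
    have hIn' : ∫ t, 1 / t ^ n ∂μ = I n := rfl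
    have hν1 : IsProbabilityMeasure ν := by
      constructor
      rw [hν, withDensity_apply _ MeasurableSet.univ, Measure.restrict_univ,
        lintegral_coe_eq_integral _ hdint]
      have e1 : ∫ t, (d t : ℝ) ∂μ = 1 := by
        rw [integral_congr_ae hdae, MeasureTheory.integral_const_mul, hIn',
          inv_mul_cancel₀ hInpos.ne']
      rw [e1]
      simp
    -- S and support
    have hbddβ : BddAbove (Set.range fun k => β k ^ 2) := by
      have hrange : (Set.range fun k => β k ^ 2) ⊆
          (Set.range fun k => α k ^ 2) ∪ ((fun j => x j ^ 2) '' Set.Icc 1 n) := by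
        rintro - ⟨k, rfl⟩
        by_cases hk : k < n
        · right
          refine ⟨n - k, ⟨by omega, by omega⟩, ?_⟩
          show x (n - k) ^ 2 = β k ^ 2
          rw [hβx k hk]
        · left
          refine ⟨k - n, ?_⟩
          show α (k - n) ^ 2 = β k ^ 2
          have : β k = α (k - n) := if_neg hk
          rw [this]
      refine BddAbove.mono hrange (BddAbove.union ?_ ((Set.finite_Icc 1 n).image _).bddAbove)
      obtain ⟨M, hM⟩ := hbdd
      refine ⟨(max M 0) ^ 2, ?_⟩
      rintro - ⟨k, rfl⟩
      exact pow_le_pow_left₀ (hpos k).le (le_trans (hM (Set.mem_range_self k)) (le_max_left _ _)) 2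
    have hRS : (⨆ k, α k ^ 2) ≤ ⨆ k, β k ^ 2 := by
      refine ciSup_le fun k => ?_
      rw [← hβα k]
      exact le_ciSup hbddβ (k + n)
    have hνsupp : ν (Set.Icc 0 (⨆ k, β k ^ 2))ᶜ = 0 := by
      rw [hν]
      refine withDensity_absolutelyContinuous μ _ ?_
      refine measure_mono_null ?_ hμsupp
      exact Set.compl_subset_compl.mpr (Set.Icc_subset_Icc_right hRS)
    have hνmom : ∀ m : ℕ, gam β m = ∫ t, t ^ m ∂ν := by
      intro m
      rw [htrans]
      rcases le_or_gt n m with hm | hm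
      · have hcong : ∫ t, (I n)⁻¹ * (1 / t ^ n) * t ^ m ∂μ
            = ∫ t, (I n)⁻¹ * t ^ (m - n) ∂μ := by
          refine integral_congr_ae ?_
          filter_upwards [haepos] with t ht
          have htn : t ^ n ≠ 0 := (pow_pos ht n).ne'
          have e2 : t ^ m = t ^ n * t ^ (m - n) := by
            rw [← pow_add]
            congr 1
            omega
          rw [e2]
          field_simp
        rw [hcong, MeasureTheory.integral_const_mul, ← hmom (m - n)]
        have e3 : n + (m - n) = m := by omega
        calc gam β m = gam β (n + (m - n)) := by rw [e3]
          _ = gam β n * gam α (m - n) := gam_extSeq_add n (m - n) x α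
          _ = (I n)⁻¹ * gam α (m - n) := by rw [hgamn, one_div]
      · have hcong : ∫ t, (I n)⁻¹ * (1 / t ^ n) * t ^ m ∂μ
            = ∫ t, (I n)⁻¹ * (1 / t ^ (n - m)) ∂μ := by
          refine integral_congr_ae ?_
          filter_upwards [haepos] with t ht
          have htm : t ^ m ≠ 0 := (pow_pos ht m).ne'
          have htnm : t ^ (n - m) ≠ 0 := (pow_pos ht (n - m)).ne'
          have e2 : t ^ n = t ^ (n - m) * t ^ m := by
            rw [← pow_add]
            congr 1
            omega
          rw [e2]
          field_simp
        have hInm : ∫ t, 1 / t ^ (n - m) ∂μ = I (n - m) := rfl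
        rw [hcong, MeasureTheory.integral_const_mul, hInm, hgamle m hm.le, div_eq_inv_mul]
    exact ⟨ν, hν1, hνsupp, hνmom⟩
end

section
/- Let $\alpha$ be a positive weight sequence, $k \ge 1$, $j \ge 0$, and for $x > 0$ let $\alpha^{(j)}(x)$ denote the sequence obtained from $\alpha$ by replacing $\alpha_j$ with $x$. Then the set $\Omega_\alpha^{k,j} = \{x > 0 : W_{\alpha^{(j)}(x)} \text{ is } k\text{-hyponormal}\}$ is convex (an interval). -/
private lemma psd_smul {n : ℕ} {A : Matrix (Fin n) (Fin n) ℝ} (hA : A.PosSemidef)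
    {c : ℝ} (hc : 0 ≤ c) : (c • A).PosSemidef := by
  refine ⟨?_, fun v => ?_⟩
  · unfold Matrix.IsHermitian
    rw [Matrix.conjTranspose_smul, hA.1.eq]
    simp
  · have h := mul_nonneg hc (hA.2 v)
    rw [Finsupp.mul_sum] at h
    refine h.trans (le_of_eq (Finsupp.sum_congr fun i _ => ?_))
    rw [Finsupp.mul_sum]
    refine Finsupp.sum_congr fun j _ => ?_
    simp only [Matrix.smul_apply, smul_eq_mul]
    ring

private lemma gam_update (α : ℕ → ℝ) (j : ℕ) (x : ℝ) (m : ℕ) :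
    gam (Function.update α j x) m =
      if j < m then x ^ 2 * ∏ i ∈ (Finset.range m).erase j, α i ^ 2 else gam α m := by
  unfold gam
  split
  · rename_i h
    rw [← Finset.mul_prod_erase _ _ (Finset.mem_range.2 h), Function.update_self]
    congr 1
    refine Finset.prod_congr rfl fun i hi => ?_
    rw [Function.update_of_ne (Finset.ne_of_mem_erase hi)]
  · rename_i h
    refine Finset.prod_congr rfl fun i hi => ?_
    have : i ≠ j := by
      have := Finset.mem_range.1 hi; omega
    rw [Function.update_of_ne this]

theorem stmt_15 (α : ℕ → ℝ) (hpos : ∀ n, 0 < α n) (hbdd : BddAbove (Set.range α))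
    (k : ℕ) (hk : 1 ≤ k) (j : ℕ) (hα : KHyponormal k α) :
    Convex ℝ {x : ℝ | 0 < x ∧ KHyponormal k (Function.update α j x)} := by
  rintro x1 ⟨hx1pos, hx1⟩ x2 ⟨hx2pos, hx2⟩ a b ha hb hab
  simp only [smul_eq_mul, Set.mem_setOf_eq]
  set x : ℝ := a * x1 + b * x2 with hxdef
  have hmin : min x1 x2 ≤ x := by
    have h1 : a * min x1 x2 ≤ a * x1 := mul_le_mul_of_nonneg_left (min_le_left _ _) ha
    have h2 : b * min x1 x2 ≤ b * x2 := mul_le_mul_of_nonneg_left (min_le_right _ _) hb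
    have h3 : a * min x1 x2 + b * min x1 x2 = min x1 x2 := by rw [← add_mul, hab, one_mul]
    linarith
  have hmax : x ≤ max x1 x2 := by
    have h1 : a * x1 ≤ a * max x1 x2 := mul_le_mul_of_nonneg_left (le_max_left _ _) ha
    have h2 : b * x2 ≤ b * max x1 x2 := mul_le_mul_of_nonneg_left (le_max_right _ _) hb
    have h3 : a * max x1 x2 + b * max x1 x2 = max x1 x2 := by rw [← add_mul, hab, one_mul]
    linarith
  have hxpos : 0 < x := lt_of_lt_of_le (lt_min hx1pos hx2pos) hmin
  refine ⟨hxpos, ?_⟩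
  -- x² lies in the segment between x1² and x2²
  have hseg : x ^ 2 ∈ segment ℝ (x1 ^ 2) (x2 ^ 2) := by
    rw [segment_eq_uIcc, Set.mem_uIcc]
    rcases le_total x1 x2 with h | h
    · left
      constructor
      · have : x1 ≤ x := by simpa [min_eq_left h] using hmin
        nlinarith
      · have : x ≤ x2 := by simpa [max_eq_right h] using hmax
        nlinarith
    · right
      constructor
      · have : x2 ≤ x := by simpa [min_eq_right h] using hmin
        nlinarith
      · have : x ≤ x1 := by simpa [max_eq_left h] using hmax
        nlinarith
  obtain ⟨c, d, hc, hd, hcd, hsq⟩ := hseg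
  simp only [smul_eq_mul] at hsq
  intro n
  have hmat : (Matrix.of fun i j' : Fin (k + 1) => gam (Function.update α j x) (n + i + j'))
      = c • (Matrix.of fun i j' : Fin (k + 1) => gam (Function.update α j x1) (n + i + j'))
        + d • (Matrix.of fun i j' : Fin (k + 1) => gam (Function.update α j x2) (n + i + j')) := by
    ext i j'
    simp only [Matrix.add_apply, Matrix.smul_apply, Matrix.of_apply, smul_eq_mul,
      gam_update]
    split
    · linear_combination (∏ i ∈ (Finset.range (n + ↑i + ↑j')).erase j, α i ^ 2) * hsq.symm
    · linear_combination (gam α (n + ↑i + ↑j')) * hcd.symm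
  rw [hmat]
  exact ((psd_smul (hx1 n) hc)).add (psd_smul (hx2 n) hd)
end

section
/- Let $0 < a < b < c$ and let $\alpha=\{\alpha_n\}$ be the weight sequence recursively generated by $\sqrt{a},\sqrt{b},\sqrt{c}$, i.e., $\alpha_0^2=a$, $\alpha_1^2=b$, $\alpha_2^2=c$, and $\alpha_{n+1}^2 = \varphi_1 + \varphi_0/\alpha_n^2$ with $\varphi_0 = -\frac{ab(c-b)}{b-a}$ and $\varphi_1 = \frac{b(c-a)}{b-a}$. For $x > 0$ let $T_x$ be the weighted shift with weights $\sqrt{x},\alpha_1,\alpha_2,\dots$ (zeroth weight replaced by $\sqrt{x}$). Then $T_x$ is 2-hyponormal if and only if $x \le a$. -/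
set_option maxHeartbeats 1000000 in
theorem stmt_18 (a b c : ℝ) (ha : 0 < a) (hab : a < b) (hbc : b < c)
    (αsq : ℕ → ℝ) (h0 : αsq 0 = a) (h1 : αsq 1 = b) (h2 : αsq 2 = c)
    (hrec : ∀ n, 2 ≤ n →
      αsq (n + 1) = b * (c - a) / (b - a) + (-(a * b * (c - b) / (b - a))) / αsq n)
    (x : ℝ) (hx : 0 < x) :
    KHyponormal 2 (fun k => if k = 0 then Real.sqrt x else Real.sqrt (αsq k)) ↔ x ≤ a := by
  have hba : (0:ℝ) < b - a := by linarith
  have hb : (0:ℝ) < b := by linarith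
  have hc : (0:ℝ) < c := by linarith
  have hcb : (0:ℝ) < c - b := by linarith
  set α : ℕ → ℝ := fun k => if k = 0 then Real.sqrt x else Real.sqrt (αsq k) with hαdef
  set φ0 : ℝ := -(a * b * (c - b) / (b - a)) with hφ0
  set φ1 : ℝ := b * (c - a) / (b - a) with hφ1
  clear_value α φ0 φ1
  have hφ0neg : φ0 < 0 := by
    have : 0 < a * b * (c - b) / (b - a) := div_pos (mul_pos (mul_pos ha hb) hcb) hba
    rw [hφ0]; linarith
  have hφ1pos : 0 < φ1 := by rw [hφ1]; exact div_pos (mul_pos hb (by linarith)) hba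
  have hab1 : φ1 * a + φ0 = a * b := by rw [hφ0, hφ1]; field_simp; ring
  have hbb : φ1 * b + φ0 = b * c := by rw [hφ0, hφ1]; field_simp; ring
  have hcc : c * c < φ1 * c + φ0 := by
    have e : φ1 * c + φ0 - c * c = a * (c - b) ^ 2 / (b - a) := by
      rw [hφ0, hφ1]; field_simp; ring
    nlinarith [div_pos (mul_pos ha (pow_pos hcb 2)) hba]
  -- αsq is at least c from index 2 on
  have hge : ∀ n, c ≤ αsq (n + 2) := by
    intro n
    induction n with
    | zero => rw [h2]
    | succ m ih =>
      have hpos : 0 < αsq (m + 2) := lt_of_lt_of_le hc ih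
      have hr := hrec (m + 2) (by omega)
      rw [show m + 1 + 2 = m + 2 + 1 from by omega, hr]
      have hd : φ0 / c ≤ φ0 / αsq (m + 2) := by
        rw [div_le_div_iff₀ hc hpos]
        nlinarith
      have h2' : c ≤ φ1 + φ0 / c := by
        have e2 : φ1 + φ0 / c - c = (φ1 * c + φ0 - c * c) / c := by field_simp
        nlinarith [div_pos (by linarith : (0:ℝ) < φ1 * c + φ0 - c * c) hc]
      linarith
  have hαsqpos : ∀ n, 0 < αsq n := by
    rintro (_ | _ | n)
    · rw [h0]; exact ha
    · rw [h1]; exact hb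
    · exact lt_of_lt_of_le hc (hge n)
  -- discriminant
  have hDpos : 0 < φ1 ^ 2 + 4 * φ0 := by
    have e : φ1 ^ 2 + 4 * φ0 =
        (b * ((c - b) - (b - a)) ^ 2 + 4 * (b - a) ^ 2 * (c - b)) * b / (b - a) ^ 2 := by
      rw [hφ0, hφ1]; field_simp; ring
    rw [e]
    have : 0 < b * ((c - b) - (b - a)) ^ 2 + 4 * (b - a) ^ 2 * (c - b) := by
      nlinarith [mul_nonneg hb.le (sq_nonneg ((c - b) - (b - a))), mul_pos (mul_pos hba hba) hcb]
    positivity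
  set sd : ℝ := Real.sqrt (φ1 ^ 2 + 4 * φ0) with hsddef
  clear_value sd
  have hsd : 0 < sd := hsddef ▸ Real.sqrt_pos.mpr hDpos
  have hsd2 : sd ^ 2 = φ1 ^ 2 + 4 * φ0 := by rw [hsddef]; exact Real.sq_sqrt hDpos.le
  set s0 : ℝ := (φ1 - sd) / 2 with hs0def
  set s1 : ℝ := (φ1 + sd) / 2 with hs1def
  clear_value s0 s1
  have hsum : s0 + s1 = φ1 := by rw [hs0def, hs1def]; ring
  have hprod : s0 * s1 = -φ0 := by
    rw [hs0def, hs1def]; linear_combination (-(1:ℝ)/4) * hsd2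
  have hdiff : s1 - s0 = sd := by rw [hs0def, hs1def]; ring
  have hs1pos : 0 < s1 := by rw [hs1def]; linarith
  have hs0pos : 0 < s0 := by
    by_contra h
    push_neg at h
    have : s0 * s1 ≤ 0 := mul_nonpos_of_nonpos_of_nonneg h hs1pos.le
    rw [hprod] at this; linarith
  have haq : (s1 - a) * (a - s0) = a * b - a * a := by
    linear_combination a * hsum - hprod + hab1
  have hP : 0 < (s1 - a) * (a - s0) := by rw [haq]; nlinarith
  have has0 : 0 < a - s0 := by
    by_contra h
    push_neg at h
    have h1' : 0 ≤ s1 - a := by linarith [hdiff, hsd]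
    have := mul_nonpos_of_nonneg_of_nonpos h1' h
    linarith
  have has1 : 0 < s1 - a := by
    by_contra h
    push_neg at h
    have := mul_nonpos_of_nonpos_of_nonneg h has0.le
    linarith
  set ρ0 : ℝ := (s1 - a) / sd with hρ0def
  set ρ1 : ℝ := (a - s0) / sd with hρ1def
  clear_value ρ0 ρ1
  have hρ0 : 0 < ρ0 := hρ0def ▸ div_pos has1 hsd
  have hρ1 : 0 < ρ1 := hρ1def ▸ div_pos has0 hsd
  have hρsum : ρ0 + ρ1 = 1 := by
    rw [hρ0def, hρ1def, ← add_div]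
    rw [show s1 - a + (a - s0) = sd from by linarith [hdiff]]
    exact div_self hsd.ne'
  have hρa : ρ0 * s0 + ρ1 * s1 = a := by
    rw [hρ0def, hρ1def]
    field_simp
    linear_combination a * hdiff
  have hs0sq : s0 ^ 2 = φ1 * s0 + φ0 := by linear_combination s0 * hsum - hprod
  have hs1sq : s1 ^ 2 = φ1 * s1 + φ0 := by linear_combination s1 * hsum - hprod
  -- the subnormal-completion moment sequence
  set G : ℕ → ℝ := fun n => ρ0 * s0 ^ n + ρ1 * s1 ^ n with hGdef
  have hG : ∀ n, G n = ρ0 * s0 ^ n + ρ1 * s1 ^ n := fun n => by rw [hGdef]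
  clear_value G
  have hG0 : G 0 = 1 := by rw [hG]; simpa using hρsum
  have hG1 : G 1 = a := by rw [hG]; simpa using hρa
  have hGrec : ∀ n, G (n + 2) = φ1 * G (n + 1) + φ0 * G n := by
    intro n
    rw [hG, hG, hG]
    linear_combination (ρ0 * s0 ^ n) * hs0sq + (ρ1 * s1 ^ n) * hs1sq
  have hGpos : ∀ n, 0 < G n := by
    intro n
    rw [hG]
    exact add_pos (mul_pos hρ0 (pow_pos hs0pos n)) (mul_pos hρ1 (pow_pos hs1pos n))
  have hG2 : G 2 = a * b := by
    rw [hGrec 0, hG0, hG1]; linear_combination hab1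
  have hG3 : G 3 = a * b * c := by
    rw [hGrec 1, hG2, hG1]; linear_combination a * hbb
  have key : ∀ n, αsq (n + 1) * G (n + 1) = G (n + 2) := by
    intro n
    induction n with
    | zero => rw [h1, hG1, hG2]; ring
    | succ m ih =>
      rcases m with _ | k
      · rw [h2, hG2, hG3]; ring
      · have hr := hrec (k + 2) (by omega)
        have hnz : αsq (k + 2) ≠ 0 := (hαsqpos _).ne'
        show αsq (k + 3) * G (k + 3) = G (k + 4)
        have ih' : αsq (k + 2) * G (k + 2) = G (k + 2 + 1) := ih
        rw [show k + 3 = k + 2 + 1 from rfl] at hr ⊢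
        rw [hr, show k + 2 + 1 + 1 = k + 2 + 2 from rfl, hGrec (k + 2)]
        field_simp
        linear_combination (-φ0) * ih'
  -- gamma values
  have hgam0 : gam α 0 = 1 := by simp [gam]
  have hgam1 : gam α 1 = x := by
    rw [gam, Finset.prod_range_one, hαdef]
    simp [Real.sq_sqrt hx.le]
  have hgamsucc : ∀ n, gam α (n + 1) = gam α n * α n ^ 2 := by
    intro n; rw [gam, gam, Finset.prod_range_succ]
  have hα : ∀ n, α (n + 1) ^ 2 = αsq (n + 1) := by
    intro n
    rw [hαdef]
    simp [Real.sq_sqrt (hαsqpos (n + 1)).le]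
  have hgam : ∀ n, gam α (n + 1) = x / a * G (n + 1) := by
    intro n
    induction n with
    | zero => rw [hgam1, hG1]; field_simp
    | succ m ih =>
      rw [hgamsucc (m + 1), ih, hα m, ← key m]
      ring
  have hg2 : gam α 2 = x * b := by
    rw [hgamsucc 1, hgam1, hα 0, h1]
  have hg3 : gam α 3 = x * b * c := by
    rw [hgamsucc 2, hg2, hα 1, h2]
  have hα3 : αsq 3 = φ1 + φ0 / c := by
    have := hrec 2 le_rfl
    rw [h2] at this
    exact this
  have hg4 : gam α 4 = x * b * c * (φ1 + φ0 / c) := by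
    rw [hgamsucc 3, hg3, hα 2, hα3]
  constructor
  · intro h
    have hq := (h 0).dotProduct_mulVec_nonneg ![φ0, φ1, -1]
    simp only [dotProduct, Matrix.mulVec, Fin.sum_univ_succ, Fin.sum_univ_zero,
      Matrix.of_apply, Matrix.cons_val_zero, Matrix.cons_val_one, Matrix.head_cons,
      Matrix.cons_val_two, Matrix.tail_cons, Pi.star_apply, star_trivial, Fin.val_zero,
      Fin.val_succ, Fin.val_one, Matrix.cons_val_succ] at hq
    norm_num at hq
    rw [hgam0, hgam1, hg2, hg3, hg4] at hq
    have hcinv : c * c⁻¹ = 1 := mul_inv_cancel₀ hc.ne'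
    have hE : a * (φ0 * (1 * φ0 + (x * φ1 + -(x * b))) +
        (φ1 * (x * φ0 + (x * b * φ1 + -(x * b * c))) +
          (x * b * c * (φ1 + φ0 / c) + -(x * b * c * φ1) + -(x * b * φ0)))) =
        φ0 ^ 2 * (a - x) := by
      linear_combination (a * x * φ1) * hbb + (x * φ0) * hab1 + (a * x * b * φ0) * hcinv
    have hq2 : 0 ≤ φ0 ^ 2 * (a - x) := by
      rw [← hE]
      exact mul_nonneg ha.le hq
    by_contra hxa
    push_neg at hxa
    have hφsq : 0 < φ0 ^ 2 := by
      rw [sq]; exact mul_pos_of_neg_of_neg hφ0neg hφ0neg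
    linarith only [mul_pos hφsq (show 0 < x - a by linarith only [hxa]), hq2]
  · intro hxa n
    have ht0 : 0 ≤ x / a := div_nonneg hx.le ha.le
    have ht1 : x / a ≤ 1 := (div_le_one ha).mpr hxa
    refine Matrix.PosSemidef.of_dotProduct_mulVec_nonneg ?_ ?_
    · show _ = _
      ext i j
      simp only [Matrix.conjTranspose_apply, Matrix.of_apply, star_trivial]
      congr 1
      omega
    · intro y
      simp only [dotProduct, Matrix.mulVec, Fin.sum_univ_succ, Fin.sum_univ_zero,
        Matrix.of_apply, Pi.star_apply, star_trivial, Fin.val_zero, Fin.val_succ,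
        Fin.val_one, add_zero]
      have ex1 : gam α 1 = x / a * G 1 := hgam 0
      have ex2 : gam α 2 = x / a * G 2 := hgam 1
      have ex3 : gam α 3 = x / a * G 3 := hgam 2
      have ex4 : gam α 4 = x / a * G 4 := hgam 3
      rcases n with _ | m
      · simp only [show (0:ℕ)+1=1 from rfl, show (0:ℕ)+2=2 from rfl,
          show (0:ℕ)+1+1=2 from rfl, show (0:ℕ)+1+2=3 from rfl,
          show (0:ℕ)+2+1=3 from rfl, show (0:ℕ)+2+2=4 from rfl]
        rw [hgam0, ex1, ex2, ex3, ex4]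
        have hid : y 0 * (1 * y 0 + (x / a * G 1 * y (Fin.succ 0) +
              x / a * G 2 * y (Fin.succ 0).succ)) +
            (y (Fin.succ 0) * (x / a * G 1 * y 0 + (x / a * G 2 * y (Fin.succ 0) +
              x / a * G 3 * y (Fin.succ 0).succ)) +
            y (Fin.succ 0).succ * (x / a * G 2 * y 0 + (x / a * G 3 * y (Fin.succ 0) +
              x / a * G 4 * y (Fin.succ 0).succ))) =
            x / a * (ρ0 * (y 0 + s0 * y (Fin.succ 0) + s0 ^ 2 * y (Fin.succ 0).succ) ^ 2 +
              ρ1 * (y 0 + s1 * y (Fin.succ 0) + s1 ^ 2 * y (Fin.succ 0).succ) ^ 2) +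
            (1 - x / a) * y 0 ^ 2 := by
          rw [hG 1, hG 2, hG 3, hG 4]
          linear_combination (-(x / a) * y 0 ^ 2) * hρsum
        rw [hid]
        exact add_nonneg (mul_nonneg ht0 (add_nonneg (mul_nonneg hρ0.le (sq_nonneg _))
          (mul_nonneg hρ1.le (sq_nonneg _))))
          (mul_nonneg (by linarith only [ht1]) (sq_nonneg _))
      · have e1 : gam α (m + 1) = x / a * G (m + 1) := hgam m
        have e2 : gam α (m + 2) = x / a * G (m + 2) := hgam (m + 1)
        have e3 : gam α (m + 3) = x / a * G (m + 3) := hgam (m + 2)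
        have e4 : gam α (m + 4) = x / a * G (m + 4) := hgam (m + 3)
        have e5 : gam α (m + 5) = x / a * G (m + 5) := hgam (m + 4)
        simp only [show m + 1 + 1 = m + 2 from rfl, show m + 1 + 2 = m + 3 from rfl,
          show m + 1 + 1 + 1 = m + 3 from rfl, show m + 1 + 1 + 2 = m + 4 from rfl,
          show m + 1 + 2 + 1 = m + 4 from rfl, show m + 1 + 2 + 2 = m + 5 from rfl]
        rw [e1, e2, e3, e4, e5]
        have hid : y 0 * (x / a * G (m + 1) * y 0 + (x / a * G (m + 2) * y (Fin.succ 0) +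
              x / a * G (m + 3) * y (Fin.succ 0).succ)) +
            (y (Fin.succ 0) * (x / a * G (m + 2) * y 0 + (x / a * G (m + 3) * y (Fin.succ 0) +
              x / a * G (m + 4) * y (Fin.succ 0).succ)) +
            y (Fin.succ 0).succ * (x / a * G (m + 3) * y 0 + (x / a * G (m + 4) * y (Fin.succ 0) +
              x / a * G (m + 5) * y (Fin.succ 0).succ))) =
            x / a * (ρ0 * s0 ^ (m + 1) *
                (y 0 + s0 * y (Fin.succ 0) + s0 ^ 2 * y (Fin.succ 0).succ) ^ 2 +
              ρ1 * s1 ^ (m + 1) *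
                (y 0 + s1 * y (Fin.succ 0) + s1 ^ 2 * y (Fin.succ 0).succ) ^ 2) := by
          rw [hG (m + 1), hG (m + 2), hG (m + 3), hG (m + 4), hG (m + 5)]
          ring
        rw [hid]
        exact mul_nonneg ht0 (add_nonneg
          (mul_nonneg (mul_nonneg hρ0.le (pow_nonneg hs0pos.le _)) (sq_nonneg _))
          (mul_nonneg (mul_nonneg hρ1.le (pow_nonneg hs1pos.le _)) (sq_nonneg _)))
end
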